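/- Fix β > 0 and positive reals x, y with x ≥ 2y·sqrt(cosh(β)³/(1+cosh(β))²). With x', y' defined by x' = sqrt((x + D)/(2·cosh(β)^4)) and y' = sqrt((x - D)/(2·sinh(β)²·cosh(β))) where D = sqrt(x² - 4y²·cosh(β)³/(1+cosh(β))²), one has x', y' > 0 and x'/y' < (sinh(β)·(1+cosh(β))/cosh(β)³)·(x/y). -/

import Mathlib

set_option maxHeartbeats 1000000


theorem stmt_8 (β : ℝ) (hβ : 0 < β) (x y : ℝ) (hx : 0 < x) (hy : 0 < y)
    (hcond : 2 * y * Real.sqrt (Real.cosh β ^ 3 / (1 + Real.cosh β) ^ 2) ≤ x) :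
    let D := Real.sqrt (x ^ 2 - 4 * y ^ 2 * Real.cosh β ^ 3 / (1 + Real.cosh β) ^ 2)
    let x' := Real.sqrt ((x + D) / (2 * Real.cosh β ^ 4))
    let y' := Real.sqrt ((x - D) / (2 * Real.sinh β ^ 2 * Real.cosh β))
    0 < x' ∧ 0 < y' ∧
    x' / y' < (Real.sinh β * (1 + Real.cosh β) / Real.cosh β ^ 3) * (x / y) := by
  intro D x' y'
  set c := Real.cosh β with hc_def
  set s := Real.sinh β with hs_def
  have hc : 1 < c := Real.one_lt_cosh.mpr hβ.ne'
  have hs : 0 < s := Real.sinh_pos_iff.mpr hβ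
  have hc0 : 0 < c := by linarith
  have h1c : 0 < 1 + c := by linarith
  have hK : 0 < c ^ 3 / (1 + c) ^ 2 := by positivity
  have hsq : 4 * y ^ 2 * (c ^ 3 / (1 + c) ^ 2) ≤ x ^ 2 := by
    have h2 : (2 * y * Real.sqrt (c ^ 3 / (1 + c) ^ 2)) ^ 2 ≤ x ^ 2 :=
      pow_le_pow_left₀ (by positivity) hcond 2
    have h3 : Real.sqrt (c ^ 3 / (1 + c) ^ 2) ^ 2 = c ^ 3 / (1 + c) ^ 2 :=
      Real.sq_sqrt hK.le
    nlinarith [h2, h3]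
  have hA0 : 0 ≤ x ^ 2 - 4 * y ^ 2 * c ^ 3 / (1 + c) ^ 2 := by
    have : 4 * y ^ 2 * c ^ 3 / (1 + c) ^ 2 = 4 * y ^ 2 * (c ^ 3 / (1 + c) ^ 2) := by ring
    linarith [hsq, this.ge]
  have hD2 : D ^ 2 = x ^ 2 - 4 * y ^ 2 * c ^ 3 / (1 + c) ^ 2 := Real.sq_sqrt hA0
  have hD0 : 0 ≤ D := Real.sqrt_nonneg _
  have hpos : 0 < 4 * y ^ 2 * c ^ 3 / (1 + c) ^ 2 := by positivity
  have hDx : D < x := by nlinarith [hD2, hpos]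
  have hxD : 0 < x + D := by linarith
  have hxD' : 0 < x - D := by linarith
  have hx'pos : 0 < x' := Real.sqrt_pos.mpr (by positivity)
  have hy'pos : 0 < y' := Real.sqrt_pos.mpr (by positivity)
  refine ⟨hx'pos, hy'pos, ?_⟩
  have hx'2 : x' ^ 2 = (x + D) / (2 * c ^ 4) := Real.sq_sqrt (by positivity)
  have hy'2 : y' ^ 2 = (x - D) / (2 * s ^ 2 * c) := Real.sq_sqrt (by positivity)
  have hI : (x + D) * (x - D) * (1 + c) ^ 2 = 4 * y ^ 2 * c ^ 3 := by
    have h : (x + D) * (x - D) = x ^ 2 - D ^ 2 := by ring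
    rw [h, hD2]
    field_simp
    ring
  have hsum : (x + D) ^ 2 < 4 * x ^ 2 := by nlinarith [hDx, hxD]
  have hineq : c ^ 3 * y ^ 2 * (x + D) < (1 + c) ^ 2 * x ^ 2 * (x - D) := by
    nlinarith [hI, hsum, mul_pos hxD hxD', mul_pos (pow_pos hc0 3) (pow_pos hy 2),
      mul_pos (mul_pos (pow_pos hc0 3) (pow_pos hy 2)) hxD]
  refine lt_of_pow_lt_pow_left₀ 2 (by positivity) ?_
  rw [div_pow, hx'2, hy'2]
  have e1 : (x + D) / (2 * c ^ 4) / ((x - D) / (2 * s ^ 2 * c))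
      = ((x + D) * (s ^ 2 * c)) / (c ^ 4 * (x - D)) := by
    field_simp
  have e2 : (s * (1 + c) / c ^ 3 * (x / y)) ^ 2
      = (s ^ 2 * (1 + c) ^ 2 * x ^ 2) / (c ^ 6 * y ^ 2) := by
    field_simp
  rw [e1, e2, div_lt_div_iff₀ (by positivity) (by positivity)]
  nlinarith [mul_lt_mul_of_pos_left hineq (by positivity : (0:ℝ) < s ^ 2 * c ^ 4)]
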